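/- Let f₁,…,f_d be invertible elements of Cl(p,q) each squaring to a negative real scalar, and A ∈ Cl(p,q). Then the ordered product of exponentials satisfies (∏_{k=1}^d exp(-f_k)) · A = Σ_{j∈{0,1}^d} A_{c^j(f_d,…,f₁)} · ∏_{k=1}^d exp(-(−1)^{j_k} f_k), where A_{c^j(f_d,…,f₁)} applies the commuting/anticommuting projections starting with f_d. -/

import Mathlib

/-- Commuting/anticommuting projections with respect to an element `B` with inverse `Binv`:
`c⁰(A) = ½(A + B⁻¹AB)`, `c¹(A) = ½(A − B⁻¹AB)`. -/
noncomputable def cProjInv {𝒢 : Type*} [Ring 𝒢] [Algebra ℝ 𝒢]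
    (b : Bool) (Binv B A : 𝒢) : 𝒢 :=
  if b then (2⁻¹ : ℝ) • (A - Binv * A * B) else (2⁻¹ : ℝ) • (A + Binv * A * B)

section Aux
open NormedSpace

variable {𝒢 : Type*} [NormedRing 𝒢] [NormedAlgebra ℝ 𝒢] [CompleteSpace 𝒢]

lemma exp_semiconj (g h Y : 𝒢) (hY : Y * h = g * Y) :
    exp g * Y = Y * exp h := by
  have hs : SemiconjBy Y h g := hY
  rw [exp_eq_tsum (𝕂 := ℝ)]
  dsimp only
  rw [← (expSeries_summable' (𝕂 := ℝ) g).tsum_mul_right,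
      ← (expSeries_summable' (𝕂 := ℝ) h).tsum_mul_left]
  congr 1
  funext n
  rw [smul_mul_assoc, mul_smul_comm, (hs.pow_right n).eq]

lemma step_lemma (F : 𝒢) (r : ℝ) (hr : 0 < r)
    (hF : F * F = algebraMap ℝ 𝒢 (-r)) (A : 𝒢) :
    exp (-F) * A =
      cProjInv false (r⁻¹ • (-F)) F A * exp (-F)
        + cProjInv true (r⁻¹ • (-F)) F A * exp F := by
  have hs : F * F = (-r) • (1 : 𝒢) := by rw [hF, Algebra.algebraMap_eq_smul_one]
  have hr' : r ≠ 0 := hr.ne'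
  have hBinv : r⁻¹ • (-F) = (-r)⁻¹ • F := by
    rw [smul_neg, ← neg_smul, ← neg_inv]
  have hL : ∀ x : 𝒢, F * (F * x) = (-r) • x := fun x => by
    rw [← mul_assoc, hs, smul_mul_assoc, one_mul]
  have hR : ∀ x : 𝒢, x * F * F = (-r) • x := fun x => by
    rw [mul_assoc, hs, mul_smul_comm, mul_one]
  have hinv : ((-r)⁻¹ : ℝ) • ((-r : ℝ) • (F * A)) = F * A := by
    rw [smul_smul, inv_mul_cancel₀ (by simpa using hr'), one_smul]
  have hinv' : ((-r)⁻¹ : ℝ) • ((-r : ℝ) • (A * F)) = A * F := by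
    rw [smul_smul, inv_mul_cancel₀ (by simpa using hr'), one_smul]
  set c0 := cProjInv false (r⁻¹ • (-F)) F A with hc0def
  set c1 := cProjInv true (r⁻¹ • (-F)) F A with hc1def
  have hsum : c0 + c1 = A := by
    rw [hc0def, hc1def]
    simp only [cProjInv, if_true, if_false, Bool.false_eq_true, ite_false, ite_true,
      ← smul_add]
    rw [add_add_sub_cancel, ← two_smul ℝ, smul_smul]
    norm_num
  have hL2 : F * (F * A * F) = (-r) • (A * F) := by
    rw [mul_assoc F A F]; exact hL (A * F)
  have hR2 : F * A * F * F = (-r) • (F * A) := hR (F * A)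
  have hcomm0 : c0 * F = F * c0 := by
    rw [hc0def]
    simp only [cProjInv, Bool.false_eq_true, ite_false, hBinv]
    simp only [smul_mul_assoc, mul_smul_comm, add_mul, mul_add, hR2, hL2, hinv, hinv']
    rw [add_comm (A * F)]
  have hanti1 : c1 * F = -F * c1 := by
    rw [hc1def]
    simp only [cProjInv, ite_true, hBinv]
    simp only [smul_mul_assoc, mul_smul_comm, sub_mul, mul_sub, neg_mul, hR2, hL2,
      hinv, hinv', smul_neg, neg_sub]
    rw [smul_sub, smul_sub]
    module
  have e0 : exp (-F) * c0 = c0 * exp (-F) :=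
    exp_semiconj (-F) (-F) c0 (by rw [mul_neg, neg_mul, hcomm0])
  have e1 : exp (-F) * c1 = c1 * exp F :=
    exp_semiconj (-F) F c1 (by rw [hanti1, neg_mul])
  calc exp (-F) * A = exp (-F) * c0 + exp (-F) * c1 := by
        rw [← mul_add, hsum]
    _ = _ := by rw [e0, e1]

end Aux

/-- Lemma on products with exponentials: for `f₁,…,f_d` squaring to negative real scalars
(so `f_k⁻¹ = r_k⁻¹ (-f_k)`),
`(∏ₖ exp(-f_k))·A = Σ_{j∈{0,1}^d} A_{c^j(f_d,…,f₁)} ∏ₖ exp(-(−1)^{j_k} f_k)`,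
where the projections are applied first with respect to `f_d`. -/
theorem prod_exp_mul_eq_sum {𝒢 : Type*} [NormedRing 𝒢] [NormedAlgebra ℝ 𝒢] [CompleteSpace 𝒢]
    {d : ℕ} (f : Fin d → 𝒢) (r : Fin d → ℝ) (hr : ∀ k, 0 < r k)
    (hf : ∀ k, f k * f k = algebraMap ℝ 𝒢 (-(r k)))
    (A : 𝒢) :
    (List.ofFn fun k => NormedSpace.exp (-(f k))).prod * A =
      ∑ j : Fin d → Bool,
        (((List.finRange d).reverse).foldl
            (fun acc k => cProjInv (j k) ((r k)⁻¹ • (-(f k))) (f k) acc) A) *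
          (List.ofFn fun k =>
            NormedSpace.exp (-((if j k then (-1 : ℝ) else 1) • f k))).prod := by
  induction d with
  | zero => simp
  | succ n ih =>
    rw [List.ofFn_succ, List.prod_cons, mul_assoc,
      ih (fun k => f k.succ) (fun k => r k.succ) (fun k => hr _) (fun k => hf _)]
    rw [Finset.mul_sum]
    rw [← Equiv.sum_comp (Fin.consEquiv fun _ : Fin (n+1) => Bool)]
    rw [Fintype.sum_prod_type, Finset.sum_comm]
    refine Finset.sum_congr rfl fun j' _ => ?_
    simp only [Fin.consEquiv_apply, Fin.cons_succ, Fin.cons_zero, List.ofFn_succ,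
      List.prod_cons, List.finRange_succ, List.reverse_cons, List.foldl_append]
    rw [← List.map_reverse]
    simp only [List.foldl_map, Fin.cons_succ, Fin.cons_zero, List.foldl_cons, List.foldl_nil,
      Fintype.sum_bool, if_true, Bool.false_eq_true, if_false, neg_smul, one_smul, neg_neg]
    rw [← mul_assoc, step_lemma (f 0) (r 0) (hr 0) (hf 0), add_mul, mul_assoc, mul_assoc,
      add_comm]
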